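/- Let Φ: ℝ^p ⇉ ℝ^q be a polyhedral set-valued mapping. Then for every tangent cone T ∈ 𝒯(Φ), the Hoffman constant of the associated sublinear mapping Φ_T is bounded by the Hoffman constant of Φ: H(Φ_T) ≤ H(Φ). -/

import Mathlib

open Matrix Set

noncomputable section

/-- A norm on `Fin n → ℝ`, given as a function with the norm axioms. -/
structure IsNorm {n : ℕ} (ν : (Fin n → ℝ) → ℝ) : Prop where
  nonneg : ∀ x, 0 ≤ ν x
  eq_zero_iff : ∀ x, ν x = 0 ↔ x = 0
  smul : ∀ (a : ℝ) (x : Fin n → ℝ), ν (a • x) = |a| * ν x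
  triangle : ∀ x y, ν (x + y) ≤ ν x + ν y

/-- The dual norm of `ν`, with respect to the standard dot-product pairing. -/
def dualNorm {n : ℕ} (ν : (Fin n → ℝ) → ℝ) (z : Fin n → ℝ) : ℝ :=
  sSup {r | ∃ x, ν x ≤ 1 ∧ r = z ⬝ᵥ x}

/-- Point-to-set distance induced by the norm `ν`. -/
def distWith {n : ℕ} (ν : (Fin n → ℝ) → ℝ) (x : Fin n → ℝ) (S : Set (Fin n → ℝ)) : ℝ :=
  sInf ((fun s => ν (x - s)) '' S)

/-- The graph of a set-valued mapping. -/
def graphOf {p q : ℕ} (Φ : (Fin p → ℝ) → Set (Fin q → ℝ)) :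
    Set ((Fin p → ℝ) × (Fin q → ℝ)) := {z | z.2 ∈ Φ z.1}

/-- The domain of a set-valued mapping. -/
def domOf {p q : ℕ} (Φ : (Fin p → ℝ) → Set (Fin q → ℝ)) : Set (Fin p → ℝ) :=
  {u | (Φ u).Nonempty}

/-- The image of a set-valued mapping. -/
def imOf {p q : ℕ} (Φ : (Fin p → ℝ) → Set (Fin q → ℝ)) : Set (Fin q → ℝ) :=
  ⋃ u, Φ u

/-- The inverse of a set-valued mapping. -/
def invOf {p q : ℕ} (Φ : (Fin p → ℝ) → Set (Fin q → ℝ)) : (Fin q → ℝ) → Set (Fin p → ℝ) :=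
  fun v => {u | v ∈ Φ u}

/-- A polyhedron: an intersection of finitely many closed half-spaces. -/
def IsPolyhedron {E : Type*} [AddCommGroup E] [Module ℝ E] (S : Set E) : Prop :=
  ∃ (k : ℕ) (f : Fin k → E →ₗ[ℝ] ℝ) (c : Fin k → ℝ), S = {x | ∀ i, f i x ≤ c i}

/-- A set-valued mapping is polyhedral if its graph is a polyhedron. -/
def IsPolyhedralMapping {p q : ℕ} (Φ : (Fin p → ℝ) → Set (Fin q → ℝ)) : Prop :=
  IsPolyhedron (graphOf Φ)

/-- A set-valued mapping is sublinear if its graph is a convex cone containing the origin. -/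
def IsSublinearMapping {p q : ℕ} (Φ : (Fin p → ℝ) → Set (Fin q → ℝ)) : Prop :=
  (0 : Fin q → ℝ) ∈ Φ 0 ∧ Convex ℝ (graphOf Φ) ∧
    ∀ (t : ℝ), 0 ≤ t → ∀ z ∈ graphOf Φ, t • z ∈ graphOf Φ

/-- The Hoffman constant of a set-valued mapping, with respect to the norms `νp, νq`. -/
def hoffmanConst {p q : ℕ} (νp : (Fin p → ℝ) → ℝ) (νq : (Fin q → ℝ) → ℝ)
    (Φ : (Fin p → ℝ) → Set (Fin q → ℝ)) : ℝ :=
  sSup {r | ∃ u v, u ∈ domOf Φ ∧ v ∈ imOf Φ ∧ v ∉ Φ u ∧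
    r = distWith νq v (Φ u) / distWith νp u (invOf Φ v)}

/-- The norm of a sublinear set-valued mapping, with respect to the norms `νp, νq`. -/
def svmNorm {p q : ℕ} (νp : (Fin p → ℝ) → ℝ) (νq : (Fin q → ℝ) → ℝ)
    (Φ : (Fin p → ℝ) → Set (Fin q → ℝ)) : ℝ :=
  sSup {r | ∃ u, u ∈ domOf Φ ∧ νp u ≤ 1 ∧ r = sInf (νq '' Φ u)}

/-- The tangent cone to a set `G` at a point `g ∈ G`. -/
def polyTangentCone {E : Type*} [AddCommGroup E] [Module ℝ E] (G : Set E) (g : E) : Set E :=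
  {d | ∃ t : ℝ, 0 < t ∧ g + t • d ∈ G}

/-- The collection of tangent cones to the graph of `Φ`. -/
def tangentCones {p q : ℕ} (Φ : (Fin p → ℝ) → Set (Fin q → ℝ)) :
    Set (Set ((Fin p → ℝ) × (Fin q → ℝ))) :=
  {T | ∃ u v, v ∈ Φ u ∧ T = polyTangentCone (graphOf Φ) (u, v)}

/-- The set-valued mapping whose graph is `T`. -/
def mapOfGraph {p q : ℕ} (T : Set ((Fin p → ℝ) × (Fin q → ℝ))) :
    (Fin p → ℝ) → Set (Fin q → ℝ) := fun w => {z | (w, z) ∈ T}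

/-- A subset is a linear subspace if it is the underlying set of a submodule. -/
def IsLinearSubspace {E : Type*} [AddCommGroup E] [Module ℝ E] (S : Set E) : Prop :=
  ∃ W : Submodule ℝ E, S = ↑W

/-- The upper adjoint of a sublinear mapping. -/
def upperAdjoint {p q : ℕ} (Φ : (Fin p → ℝ) → Set (Fin q → ℝ)) :
    (Fin q → ℝ) → Set (Fin p → ℝ) :=
  fun w => {z | ∀ u v, v ∈ Φ u → z ⬝ᵥ u ≤ w ⬝ᵥ v}

/-- The solution mapping `b ↦ {x ∈ R : Ax - b ∈ S}`. -/
def solMap {m n : ℕ} (A : Matrix (Fin m) (Fin n) ℝ) (R : Set (Fin n → ℝ))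
    (S : Set (Fin m → ℝ)) : (Fin m → ℝ) → Set (Fin n → ℝ) :=
  fun b => {x | x ∈ R ∧ A *ᵥ x - b ∈ S}

/-- The dual cone `{z : ⟨z,x⟩ ≥ 0 for all x ∈ C}`. -/
def dualConeOf {n : ℕ} (C : Set (Fin n → ℝ)) : Set (Fin n → ℝ) :=
  {z | ∀ x ∈ C, 0 ≤ z ⬝ᵥ x}

/-- A polyhedral cone. -/
def IsPolyhedralCone {n : ℕ} (C : Set (Fin n → ℝ)) : Prop :=
  IsPolyhedron C ∧ (0 : Fin n → ℝ) ∈ C ∧ ∀ (t : ℝ), 0 ≤ t → ∀ x ∈ C, t • x ∈ C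

/-- The dual solution mapping `c ↦ {y ∈ S* : c - Aᵀy ∈ R*}`. -/
def dualSolMap {m n : ℕ} (A : Matrix (Fin m) (Fin n) ℝ) (R : Set (Fin n → ℝ))
    (S : Set (Fin m → ℝ)) : (Fin n → ℝ) → Set (Fin m → ℝ) :=
  fun c => {y | y ∈ dualConeOf S ∧ c - Aᵀ *ᵥ y ∈ dualConeOf R}

/-- The box `{x : ℓ ≤ x ≤ u}`. -/
def boxSet {n : ℕ} (ℓ u : Fin n → ℝ) : Set (Fin n → ℝ) :=
  {x | ∀ i, ℓ i ≤ x i ∧ x i ≤ u i}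

/-- The nonnegative orthant of `ℝ^n`. -/
def nonnegOrthant (n : ℕ) : Set (Fin n → ℝ) := {x | ∀ i, 0 ≤ x i}

/-- The Euclidean norm on `Fin n → ℝ`. -/
def euclNorm {n : ℕ} (x : Fin n → ℝ) : ℝ := Real.sqrt (∑ i, x i ^ 2)

/-- The operator norm induced by the Euclidean norms. -/
def opNorm2 {m n : ℕ} (M : Matrix (Fin m) (Fin n) ℝ) : ℝ :=
  sSup {r | ∃ x, euclNorm x ≤ 1 ∧ r = euclNorm (M *ᵥ x)}

/-- The chi condition measure `χ(A) = sup_{D} ‖(ADAᵀ)⁻¹AD‖₂`. -/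
def chiMeasure {m n : ℕ} (A : Matrix (Fin m) (Fin n) ℝ) : ℝ :=
  sSup {r | ∃ d : Fin n → ℝ, (∀ i, 0 < d i) ∧
    r = opNorm2 ((A * Matrix.diagonal d * Aᵀ)⁻¹ * (A * Matrix.diagonal d))}

/-- The chi-bar condition measure `χ̄(A) = sup_{D} ‖Aᵀ(ADAᵀ)⁻¹AD‖₂`. -/
def chiBarMeasure {m n : ℕ} (A : Matrix (Fin m) (Fin n) ℝ) : ℝ :=
  sSup {r | ∃ d : Fin n → ℝ, (∀ i, 0 < d i) ∧
    r = opNorm2 (Aᵀ * (A * Matrix.diagonal d * Aᵀ)⁻¹ * (A * Matrix.diagonal d))}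

/-- The orthogonal complement (w.r.t. the dot product) of a set. -/
def perpOf {m : ℕ} (L : Set (Fin m → ℝ)) : Set (Fin m → ℝ) :=
  {y | ∀ s ∈ L, y ⬝ᵥ s = 0}

/-- The mapping `P_A : b ↦ {x ≥ 0 : Ax = b}`. -/
def PA {m n : ℕ} (A : Matrix (Fin m) (Fin n) ℝ) : (Fin m → ℝ) → Set (Fin n → ℝ) :=
  fun b => {x | (∀ i, 0 ≤ x i) ∧ A *ᵥ x = b}

/-- The mapping `P_A* : c ↦ {y : Aᵀy ≤ c}`. -/
def PAstar {m n : ℕ} (A : Matrix (Fin m) (Fin n) ℝ) : (Fin n → ℝ) → Set (Fin m → ℝ) :=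
  fun c => {y | ∀ i, (Aᵀ *ᵥ y) i ≤ c i}

/-- Signature vectors: entries equal to `1` or `-1`. -/
def IsSignVector {n : ℕ} (d : Fin n → ℝ) : Prop := ∀ i, d i = 1 ∨ d i = -1


namespace IsNorm

variable {n : ℕ} {ν : (Fin n → ℝ) → ℝ} (hν : IsNorm ν)

include hν

lemma zero : ν 0 = 0 := (hν.eq_zero_iff 0).2 rfl

lemma sum_le {ι : Type*} (s : Finset ι) (f : ι → (Fin n → ℝ)) :
    ν (∑ i ∈ s, f i) ≤ ∑ i ∈ s, ν (f i) := by
  classical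
  induction s using Finset.induction with
  | empty => simp [hν.zero]
  | insert _ _ hx ih =>
      rw [Finset.sum_insert hx, Finset.sum_insert hx]
      exact le_trans (hν.triangle _ _) (by linarith)

lemma le_const : ∃ C : ℝ, 0 ≤ C ∧ ∀ x, ν x ≤ C * ‖x‖ := by
  refine ⟨∑ i, ν (Pi.single i 1), Finset.sum_nonneg fun i _ => hν.nonneg _, fun x => ?_⟩
  have hx : x = ∑ i, (x i) • (Pi.single i 1 : Fin n → ℝ) := by
    ext j; simp [Pi.single_apply]
  calc ν x = ν (∑ i, (x i) • (Pi.single i 1 : Fin n → ℝ)) := by rw [← hx]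
    _ ≤ ∑ i, ν ((x i) • (Pi.single i 1 : Fin n → ℝ)) := hν.sum_le _ _
    _ = ∑ i, |x i| * ν (Pi.single i 1) := by simp [hν.smul]
    _ ≤ ∑ i, ‖x‖ * ν (Pi.single i 1) := by
        refine Finset.sum_le_sum fun i _ => ?_
        exact mul_le_mul_of_nonneg_right (by
          simpa using norm_le_pi_norm x i) (hν.nonneg _)
    _ = (∑ i, ν (Pi.single i 1)) * ‖x‖ := by rw [Finset.sum_mul]; exact Finset.sum_congr rfl fun i _ => mul_comm _ _

lemma lipschitz : ∃ C : ℝ, 0 ≤ C ∧ ∀ x y, |ν x - ν y| ≤ C * ‖x - y‖ := by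
  obtain ⟨C, hC0, hC⟩ := hν.le_const
  refine ⟨C, hC0, fun x y => abs_sub_le_iff.2 ⟨?_, ?_⟩⟩
  · have := hν.triangle (x - y) y
    simp only [sub_add_cancel] at this
    linarith [hC (x - y)]
  · have := hν.triangle (y - x) x
    simp only [sub_add_cancel] at this
    have h2 : ν (y - x) = ν (x - y) := by
      have : y - x = (-1 : ℝ) • (x - y) := by ring_nf; module
      rw [this, hν.smul]; simp
    rw [h2] at this
    linarith [hC (x - y)]

lemma continuous : Continuous ν := by
  obtain ⟨C, hC0, hC⟩ := hν.lipschitz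
  rw [Metric.continuous_iff]
  intro x ε hε
  rcases eq_or_lt_of_le hC0 with h | h
  · exact ⟨1, one_pos, fun y _ => by
      have := hC y x
      rw [← h] at this
      simp only [Real.dist_eq, zero_mul] at *
      linarith [abs_nonneg (ν y - ν x)]⟩
  · refine ⟨ε / C, div_pos hε h, fun y hy => ?_⟩
    have := hC y x
    rw [Real.dist_eq]
    calc |ν y - ν x| ≤ C * ‖y - x‖ := this
      _ < C * (ε / C) := by
          apply mul_lt_mul_of_pos_left _ h
          rwa [← dist_eq_norm]
      _ = ε := by field_simp

lemma const_le : ∃ c : ℝ, 0 < c ∧ ∀ x, c * ‖x‖ ≤ ν x := by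
  by_cases hn : n = 0
  · refine ⟨1, one_pos, fun x => ?_⟩
    subst hn
    have hx0 : x = 0 := Subsingleton.elim x 0
    subst hx0
    simp only [norm_zero, mul_zero, one_mul]
    exact hν.nonneg 0
  · haveI : Nonempty (Fin n) := ⟨⟨0, Nat.pos_of_ne_zero hn⟩⟩
    have hsph : (Metric.sphere (0 : Fin n → ℝ) 1).Nonempty :=
      NormedSpace.sphere_nonempty.2 zero_le_one
    have hcpt : IsCompact (Metric.sphere (0 : Fin n → ℝ) 1) := isCompact_sphere 0 1
    obtain ⟨z, hz, hzmin⟩ := hcpt.exists_isMinOn hsph hν.continuous.continuousOn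
    have hz1 : ‖z‖ = 1 := by simpa using hz
    have hzpos : 0 < ν z := by
      rcases lt_or_eq_of_le (hν.nonneg z) with h | h
      · exact h
      · exfalso
        have : z = 0 := (hν.eq_zero_iff z).1 h.symm
        rw [this] at hz1; simp at hz1
    refine ⟨ν z, hzpos, fun x => ?_⟩
    by_cases hx : x = 0
    · simp [hx, hν.zero]
    · have hxn : ‖x‖ ≠ 0 := norm_ne_zero_iff.2 hx
      have hy : ‖x‖⁻¹ • x ∈ Metric.sphere (0 : Fin n → ℝ) 1 := by
        simp [norm_smul, abs_of_nonneg (inv_nonneg.2 (norm_nonneg x)),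
          inv_mul_cancel₀ hxn]
      have hmin := hzmin hy
      simp only [Set.mem_setOf_eq] at hmin
      have hcalc : ν (‖x‖⁻¹ • x) = ‖x‖⁻¹ * ν x := by
        rw [hν.smul]; congr 1
        exact abs_of_nonneg (inv_nonneg.2 (norm_nonneg x))
      rw [hcalc] at hmin
      have hxpos : (0:ℝ) < ‖x‖ := lt_of_le_of_ne (norm_nonneg x) (Ne.symm hxn)
      calc ν z * ‖x‖ ≤ (‖x‖⁻¹ * ν x) * ‖x‖ := by
            exact mul_le_mul_of_nonneg_right hmin (le_of_lt hxpos)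
        _ = ν x := by field_simp
end IsNorm

section DistWith

variable {n : ℕ} {ν : (Fin n → ℝ) → ℝ} (hν : IsNorm ν)

include hν

lemma distWith_bddBelow (x : Fin n → ℝ) (S : Set (Fin n → ℝ)) :
    BddBelow ((fun s => ν (x - s)) '' S) :=
  ⟨0, fun r ⟨s, _, hs⟩ => hs ▸ hν.nonneg _⟩

lemma distWith_nonneg (x : Fin n → ℝ) (S : Set (Fin n → ℝ)) : 0 ≤ distWith ν x S := by
  rcases S.eq_empty_or_nonempty with h | h
  · simp [distWith, h, Real.sInf_empty]
  · exact le_csInf (h.image _) fun r ⟨s, _, hs⟩ => hs ▸ hν.nonneg _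

lemma distWith_le (x : Fin n → ℝ) {S : Set (Fin n → ℝ)} {s : Fin n → ℝ} (hs : s ∈ S) :
    distWith ν x S ≤ ν (x - s) :=
  csInf_le (distWith_bddBelow hν x S) ⟨s, hs, rfl⟩

omit hν in
lemma le_distWith (x : Fin n → ℝ) {S : Set (Fin n → ℝ)} (hS : S.Nonempty) {m : ℝ}
    (hm : ∀ s ∈ S, m ≤ ν (x - s)) : m ≤ distWith ν x S :=
  le_csInf (hS.image _) fun r ⟨s, hs, hr⟩ => hr ▸ hm s hs

lemma distWith_attained (x : Fin n → ℝ) {S : Set (Fin n → ℝ)} (hS : S.Nonempty)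
    (hSc : IsClosed S) :
    ∃ s ∈ S, distWith ν x S = ν (x - s) ∧ ∀ s' ∈ S, ν (x - s) ≤ ν (x - s') := by
  obtain ⟨s₀, hs₀⟩ := hS
  obtain ⟨c, hc, hcb⟩ := hν.const_le
  set K := S ∩ {s | ν (x - s) ≤ ν (x - s₀)} with hK
  have hKne : K.Nonempty := ⟨s₀, hs₀, by simp⟩
  have hKclosed : IsClosed K :=
    hSc.inter (isClosed_le (hν.continuous.comp (by continuity)) continuous_const)
  have hKbdd : Bornology.IsBounded K := by
    rw [Metric.isBounded_iff_subset_closedBall 0]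
    refine ⟨‖x‖ + ν (x - s₀) / c, fun s hs => ?_⟩
    have h1 : c * ‖x - s‖ ≤ ν (x - s₀) := le_trans (hcb (x - s)) hs.2
    have h2 : ‖x - s‖ ≤ ν (x - s₀) / c := (le_div_iff₀ hc).2 (by linarith)
    simp only [Metric.mem_closedBall, dist_zero_right]
    calc ‖s‖ = ‖x - (x - s)‖ := by ring_nf
      _ ≤ ‖x‖ + ‖x - s‖ := norm_sub_le _ _
      _ ≤ ‖x‖ + ν (x - s₀) / c := by linarith
  have hKcpt : IsCompact K := Metric.isCompact_of_isClosed_isBounded hKclosed hKbdd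
  obtain ⟨s, hsK, hsmin⟩ := hKcpt.exists_isMinOn hKne
    ((hν.continuous.comp (by continuity)).continuousOn :
      ContinuousOn (fun s => ν (x - s)) K)
  refine ⟨s, hsK.1, ?_, ?_⟩
  · refine le_antisymm (distWith_le hν x hsK.1) (le_distWith x ⟨s₀, hs₀⟩ fun s' hs' => ?_)
    by_cases h : s' ∈ K
    · exact hsmin h
    · have : ¬ ν (x - s') ≤ ν (x - s₀) := fun hh => h ⟨hs', hh⟩
      exact le_trans (le_trans (hsmin hsK) hsK.2) (le_of_not_ge this)
  · intro s' hs'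
    by_cases h : s' ∈ K
    · exact hsmin h
    · have : ¬ ν (x - s') ≤ ν (x - s₀) := fun hh => h ⟨hs', hh⟩
      exact le_trans (le_trans (hsmin hsK) hsK.2) (le_of_not_ge this)

lemma distWith_pos (x : Fin n → ℝ) {S : Set (Fin n → ℝ)} (hS : S.Nonempty)
    (hSc : IsClosed S) (hx : x ∉ S) : 0 < distWith ν x S := by
  obtain ⟨s, hsS, heq, -⟩ := distWith_attained hν x hS hSc
  rw [heq]
  rcases lt_or_eq_of_le (hν.nonneg (x - s)) with h | h
  · exact h
  · exfalso
    have : x - s = 0 := (hν.eq_zero_iff _).1 h.symm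
    have : x = s := by
      have := sub_eq_zero.1 this
      exact this
    exact hx (this ▸ hsS)

end DistWith

section Carath

variable {E : Type*} [AddCommGroup E] [Module ℝ E]

lemma carath_cone_aux (N : ℕ) {k : ℕ} (a : Fin k → E) (lam : Fin k → ℝ)
    (hlam : ∀ i, 0 ≤ lam i)
    (hcard : (Finset.univ.filter (fun i => lam i ≠ 0)).card ≤ N) :
    ∃ (μ : Fin k → ℝ) (J : Finset (Fin k)), (∀ i, 0 ≤ μ i) ∧
      (∀ i, μ i ≠ 0 → i ∈ J) ∧ (∀ i ∈ J, lam i ≠ 0) ∧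
      LinearIndependent ℝ (fun i : ↥J => a i) ∧
      ∑ i, μ i • a i = ∑ i, lam i • a i := by
  classical
  induction N generalizing lam with
  | zero =>
      have hJ0 : (Finset.univ.filter (fun i => lam i ≠ 0)) = ∅ :=
        Finset.card_eq_zero.1 (Nat.le_zero.1 hcard)
      have hlam0 : ∀ i, lam i = 0 := by
        intro i
        by_contra h
        have : i ∈ Finset.univ.filter (fun i => lam i ≠ 0) := by simp [h]
        simp [hJ0] at this
      refine ⟨lam, ∅, hlam, fun i hi => absurd (hlam0 i) hi, by simp, ?_, rfl⟩
      haveI : IsEmpty (↥(∅ : Finset (Fin k))) := ⟨fun i => Finset.notMem_empty _ i.2⟩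
      exact linearIndependent_empty_type
  | succ N ih =>
      set J₀ := Finset.univ.filter (fun i => lam i ≠ 0) with hJ₀
      by_cases hli : LinearIndependent ℝ (fun i : ↥J₀ => a i)
      · exact ⟨lam, J₀, hlam, fun i hi => by simp [hJ₀, hi],
          fun i hi => by simpa [hJ₀] using hi, hli, rfl⟩
      · obtain ⟨g, hg0, i₀, hgi₀⟩ := Fintype.not_linearIndependent_iff.1 hli
        -- extend g by zero, with a sign ensuring a positive entry
        have hsign : ∃ ε : ℝ, (ε = 1 ∨ ε = -1) ∧ ∃ j : ↥J₀, 0 < ε * g j := by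
          rcases lt_trichotomy (g i₀) 0 with h | h | h
          · exact ⟨-1, Or.inr rfl, i₀, by nlinarith⟩
          · exact absurd h hgi₀
          · exact ⟨1, Or.inl rfl, i₀, by nlinarith⟩
        obtain ⟨ε, hε, j₀, hj₀⟩ := hsign
        set c : Fin k → ℝ := fun i => if h : i ∈ J₀ then ε * g ⟨i, h⟩ else 0 with hc
        have hcsum : ∑ i, c i • a i = 0 := by
          rw [← Finset.sum_subset (Finset.subset_univ J₀)
            (fun i _ hi => by simp [hc, hi])]
          rw [← Finset.sum_attach J₀ (fun i => c i • a i)]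
          have hterm : ∀ i : ↥J₀, c ↑i • a ↑i = ε • (g i • a ↑i) := by
            intro i; simp only [hc, i.2, dif_pos]; rw [← smul_smul]
          rw [Finset.sum_congr rfl (fun i _ => hterm i), ← Finset.smul_sum,
            ← Finset.univ_eq_attach, hg0, smul_zero]
        have hcout : ∀ i, i ∉ J₀ → c i = 0 := fun i hi => by simp [hc, hi]
        -- the set of indices with positive c
        set M := Finset.univ.filter (fun i => 0 < c i) with hM
        have hMne : M.Nonempty := by
          refine ⟨(j₀ : Fin k), ?_⟩
          simp only [hM, Finset.mem_filter, Finset.mem_univ, true_and]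
          simpa [hc, j₀.2] using hj₀
        obtain ⟨i₁, hi₁M, hi₁min⟩ := M.exists_min_image (fun i => lam i / c i) hMne
        have hci₁ : 0 < c i₁ := by simpa [hM] using hi₁M
        set t := lam i₁ / c i₁ with ht
        have ht0 : 0 ≤ t := div_nonneg (hlam i₁) (le_of_lt hci₁)
        set μ : Fin k → ℝ := fun i => lam i - t * c i with hμ
        have hμ0 : ∀ i, 0 ≤ μ i := by
          intro i
          simp only [hμ]
          rcases lt_or_ge 0 (c i) with h | h
          · have hiM : i ∈ M := by simp [hM, h]
            have := hi₁min i hiM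
            rw [ht]
            rw [div_le_div_iff₀ hci₁ h] at this
            have h2 : lam i₁ / c i₁ * c i ≤ lam i := by
              rw [div_mul_eq_mul_div, div_le_iff₀ hci₁]; linarith
            linarith
          · have h2 : t * c i ≤ 0 := mul_nonpos_of_nonneg_of_nonpos ht0 h
            linarith [hlam i]
        have hμsupp : ∀ i, μ i ≠ 0 → lam i ≠ 0 := by
          intro i hi hli2
          apply hi
          have hcz : c i = 0 := hcout i (by simp [hJ₀, hli2])
          simp [hμ, hli2, hcz]
        have hμi₁ : μ i₁ = 0 := by
          simp only [hμ, ht]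
          field_simp
          ring
        have hi₁lam : lam i₁ ≠ 0 := by
          have : i₁ ∈ J₀ := by
            by_contra h
            exact absurd (hcout i₁ h) (ne_of_gt hci₁)
          simpa [hJ₀] using this
        have hsub : Finset.univ.filter (fun i => μ i ≠ 0) ⊂ J₀ := by
          rw [Finset.ssubset_iff_of_subset]
          · exact ⟨i₁, by simpa [hJ₀] using hi₁lam, by simp [hμi₁]⟩
          · intro i hi
            simp only [Finset.mem_filter, Finset.mem_univ, true_and] at hi
            simp [hJ₀, hμsupp i hi]
        have hcard' : (Finset.univ.filter (fun i => μ i ≠ 0)).card ≤ N := by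
          have := Finset.card_lt_card hsub
          omega
        obtain ⟨μ', J, h1, h2, h3, h4, h5⟩ := ih μ hμ0 hcard'
        refine ⟨μ', J, h1, h2, fun i hi => hμsupp i (h3 i hi), h4, ?_⟩
        rw [h5]
        have : ∑ i, μ i • a i = ∑ i, lam i • a i - t • ∑ i, c i • a i := by
          rw [Finset.smul_sum, ← Finset.sum_sub_distrib]
          exact Finset.sum_congr rfl fun i _ => by
            simp [hμ, sub_smul, smul_smul]
        rw [this, hcsum, smul_zero, sub_zero]

end Carath

section Cone

open scoped RealInnerProductSpace

lemma exists_pos_min {k : ℕ} (s : Fin k → ℝ) (hs : ∀ i, 0 < s i) (t₀ : ℝ) (ht₀ : 0 < t₀) :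
    ∃ t : ℝ, 0 < t ∧ t ≤ t₀ ∧ ∀ i, t ≤ s i := by
  classical
  have hFne : (insert t₀ (Finset.univ.image s)).Nonempty := ⟨t₀, Finset.mem_insert_self _ _⟩
  refine ⟨(insert t₀ (Finset.univ.image s)).min' hFne, ?_,
    Finset.min'_le _ _ (Finset.mem_insert_self _ _), fun i =>
    Finset.min'_le _ _ (Finset.mem_insert_of_mem (Finset.mem_image_of_mem s (Finset.mem_univ i)))⟩
  have := Finset.min'_mem _ hFne
  rcases Finset.mem_insert.1 this with h | h
  · rw [h]; exact ht₀
  · obtain ⟨i, -, hi⟩ := Finset.mem_image.1 h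
    rw [← hi]; exact hs i

variable {E : Type*} [NormedAddCommGroup E] [InnerProductSpace ℝ E] [FiniteDimensional ℝ E]

def coneGen {k : ℕ} (a : Fin k → E) : Set E :=
  {x | ∃ lam : Fin k → ℝ, (∀ i, 0 ≤ lam i) ∧ x = ∑ i, lam i • a i}

lemma coneGen_isClosed {k : ℕ} (a : Fin k → E) : IsClosed (coneGen a) := by
  classical
  have hrep : coneGen a = ⋃ (J : Finset (Fin k)),
      ⋃ (_ : LinearIndependent ℝ (fun i : ↥J => a ↑i)),
        (fun μ : ↥J → ℝ => ∑ j : ↥J, μ j • a ↑j) '' {μ | ∀ j, 0 ≤ μ j} := by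
    ext x
    constructor
    · rintro ⟨lam, hlam, rfl⟩
      obtain ⟨μ, J, h1, h2, -, h4, h5⟩ :=
        carath_cone_aux (Fintype.card (Fin k)) a lam hlam (Finset.card_le_univ _)
      refine Set.mem_iUnion.2 ⟨J, Set.mem_iUnion.2 ⟨h4, ⟨fun j => μ ↑j, fun j => h1 _, ?_⟩⟩⟩
      rw [← h5, ← Finset.sum_subset (Finset.subset_univ J)
        (fun i _ hi => by rw [of_not_not (fun h => hi (h2 i h)), zero_smul]),
        ← Finset.sum_attach J (fun i => μ i • a i), ← Finset.univ_eq_attach]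
    · intro hx
      obtain ⟨J, hJ⟩ := Set.mem_iUnion.1 hx
      obtain ⟨-, hJ2⟩ := Set.mem_iUnion.1 hJ
      obtain ⟨μ, hμ0, rfl⟩ := hJ2
      refine ⟨fun i => if h : i ∈ J then μ ⟨i, h⟩ else 0, fun i => by
        by_cases h : i ∈ J
        · simpa [h] using hμ0 ⟨i, h⟩
        · simp [h], ?_⟩
      rw [← Finset.sum_subset (Finset.subset_univ J)
        (fun i _ hi => by simp [hi]),
        ← Finset.sum_attach J (fun i => (if h : i ∈ J then μ ⟨i, h⟩ else 0) • a i),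
        ← Finset.univ_eq_attach]
      exact Finset.sum_congr rfl fun j _ => by simp [j.2]
  rw [hrep]
  refine isClosed_iUnion_of_finite fun J => ?_
  by_cases h : LinearIndependent ℝ (fun i : ↥J => a ↑i)
  · simp only [h, Set.iUnion_true]
    set L : (↥J → ℝ) →ₗ[ℝ] E :=
      { toFun := fun μ => ∑ j : ↥J, μ j • a ↑j
        map_add' := fun μ μ' => by
          rw [← Finset.sum_add_distrib]
          exact Finset.sum_congr rfl fun j _ => by rw [Pi.add_apply, add_smul]
        map_smul' := fun c μ => by
          rw [RingHom.id_apply, Finset.smul_sum]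
          exact Finset.sum_congr rfl fun j _ => by
            rw [Pi.smul_apply, smul_eq_mul, ← smul_smul] } with hL
    have hker : LinearMap.ker L = ⊥ := by
      rw [LinearMap.ker_eq_bot']
      intro μ hμ
      have := Fintype.linearIndependent_iff.1 h μ hμ
      ext j; exact this j
    have hemb := LinearMap.isClosedEmbedding_of_injective hker
    have hclosed : IsClosed {μ : ↥J → ℝ | ∀ j, 0 ≤ μ j} := by
      have : {μ : ↥J → ℝ | ∀ j, 0 ≤ μ j} = ⋂ j, {μ | 0 ≤ μ j} := by
        ext μ; simp
      rw [this]
      exact isClosed_iInter fun j =>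
        isClosed_le continuous_const (continuous_apply j)
    exact hemb.isClosedMap _ hclosed
  · simp [h]

lemma coneGen_convexCone {k : ℕ} (a : Fin k → E) :
    ∃ K : ConvexCone ℝ E, (K : Set E) = coneGen a := by
  refine ⟨{ carrier := coneGen a
            smul_mem' := fun c hc x ⟨lam, hlam, hx⟩ =>
              ⟨fun i => c * lam i, fun i => mul_nonneg (le_of_lt hc) (hlam i), by
                rw [hx, Finset.smul_sum]
                exact Finset.sum_congr rfl fun i _ => by dsimp only; rw [smul_smul]⟩
            add_mem' := fun x ⟨lam, hlam, hx⟩ y ⟨lam', hlam', hy⟩ =>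
              ⟨fun i => lam i + lam' i, fun i => add_nonneg (hlam i) (hlam' i), by
                rw [hx, hy, ← Finset.sum_add_distrib]
                exact Finset.sum_congr rfl fun i _ => (add_smul _ _ _).symm⟩ }, rfl⟩

lemma coneGen_separation {k : ℕ} (a : Fin k → E) {d : E} (hd : d ∉ coneGen a) :
    ∃ z : E, (∀ i, ⟪a i, z⟫ ≤ 0) ∧ 0 < ⟪d, z⟫ := by
  classical
  obtain ⟨K, hK⟩ := coneGen_convexCone a
  have hne : (K : Set E).Nonempty := ⟨0, by rw [hK]; exact ⟨0, fun i => le_refl _, by simp⟩⟩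
  have hcl : IsClosed (K : Set E) := by rw [hK]; exact coneGen_isClosed a
  have hdK : d ∉ K := by rw [← SetLike.mem_coe, hK]; exact hd
  obtain ⟨y, hy1, hy2⟩ :=
    (by
      have hpt : K.Pointed := by
        rw [ConvexCone.Pointed, ← SetLike.mem_coe, hK]; exact ⟨0, fun i => le_refl _, by simp⟩
      obtain ⟨y, h1, h2⟩ := ProperCone.hyperplane_separation'
        (⟨K.toPointedCone hpt, hcl⟩ : ProperCone ℝ E) (x₀ := d) hdK
      exact ⟨y, h1, by rw [real_inner_comm]; exact h2⟩ :
      ∃ y : E, (∀ x ∈ K, 0 ≤ ⟪x, y⟫) ∧ ⟪y, d⟫ < 0)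
  refine ⟨-y, fun i => ?_, ?_⟩
  · rw [inner_neg_right, neg_nonpos]
    refine hy1 _ ?_
    rw [← SetLike.mem_coe, hK]
    exact ⟨fun j => if j = i then 1 else 0, fun j => by positivity, by simp⟩
  · rw [inner_neg_right]
    rw [real_inner_comm] at hy2
    linarith

lemma lam_bound {k : ℕ} (a : Fin k → E) (J : Finset (Fin k))
    (hJ : LinearIndependent ℝ (fun i : ↥J => a ↑i)) :
    ∃ C : ℝ, 0 ≤ C ∧ ∀ μ : ↥J → ℝ, ∀ i : ↥J, |μ i| ≤ C * ‖∑ j : ↥J, μ j • a ↑j‖ := by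
  classical
  set L : (↥J → ℝ) →ₗ[ℝ] E :=
    { toFun := fun μ => ∑ j : ↥J, μ j • a ↑j
      map_add' := fun μ μ' => by
        rw [← Finset.sum_add_distrib]
        exact Finset.sum_congr rfl fun j _ => by rw [Pi.add_apply, add_smul]
      map_smul' := fun c μ => by
        rw [RingHom.id_apply, Finset.smul_sum]
        exact Finset.sum_congr rfl fun j _ => by
          rw [Pi.smul_apply, smul_eq_mul, ← smul_smul] } with hL
  have hker : LinearMap.ker L = ⊥ := by
    rw [LinearMap.ker_eq_bot']
    intro μ hμ
    have := Fintype.linearIndependent_iff.1 hJ μ hμ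
    ext j; exact this j
  obtain ⟨C, hC, hanti⟩ := LinearMap.exists_antilipschitzWith L hker
  refine ⟨C, le_of_lt (by exact_mod_cast hC), fun μ i => ?_⟩
  have h1 : |μ i| ≤ ‖μ‖ := by
    have := norm_le_pi_norm μ i
    simpa using this
  have h2 : ‖μ‖ ≤ C * ‖L μ‖ := by
    have := hanti.le_mul_dist μ 0
    rwa [dist_zero_right, dist_eq_norm, map_zero, sub_zero] at this
  exact le_trans h1 h2

end Cone

section HoffmanCore

open scoped RealInnerProductSpace

variable {E : Type*} [NormedAddCommGroup E] [InnerProductSpace ℝ E] [FiniteDimensional ℝ E]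

lemma hoffman_core {k : ℕ} (a : Fin k → E) :
    ∃ H : ℝ, 0 ≤ H ∧ ∀ (b : Fin k → ℝ) (x : E), {y : E | ∀ i, ⟪a i, y⟫ ≤ b i}.Nonempty →
      ∃ y : E, (∀ i, ⟪a i, y⟫ ≤ b i) ∧
        ‖x - y‖ ≤ H * ∑ i, max (⟪a i, x⟫ - b i) 0 := by
  classical
  -- constants for each linearly independent subfamily
  have hCs : ∀ J : Finset (Fin k), ∃ C : ℝ, 0 ≤ C ∧
      (LinearIndependent ℝ (fun i : ↥J => a ↑i) →
        ∀ μ : ↥J → ℝ, ∀ i : ↥J, |μ i| ≤ C * ‖∑ j : ↥J, μ j • a ↑j‖) := by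
    intro J
    by_cases h : LinearIndependent ℝ (fun i : ↥J => a ↑i)
    · obtain ⟨C, hC0, hC⟩ := lam_bound a J h
      exact ⟨C, hC0, fun _ => hC⟩
    · exact ⟨0, le_refl _, fun hh => absurd hh h⟩
  choose C hC0 hC using hCs
  set H : ℝ := ∑ J : Finset (Fin k), C J with hH
  have hH0 : 0 ≤ H := Finset.sum_nonneg fun J _ => hC0 J
  have hCle : ∀ J, C J ≤ H :=
    fun J => Finset.single_le_sum (fun J _ => hC0 J) (Finset.mem_univ J)
  refine ⟨H, hH0, fun b x hne => ?_⟩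
  set P : Set E := {y : E | ∀ i, ⟪a i, y⟫ ≤ b i} with hP
  have hPclosed : IsClosed P := by
    have : P = ⋂ i, {y : E | ⟪a i, y⟫ ≤ b i} := by ext y; simp [hP]
    rw [this]
    exact isClosed_iInter fun i =>
      isClosed_le (Continuous.inner continuous_const continuous_id) continuous_const
  have hPconvex : Convex ℝ P := by
    intro y hy y' hy' s t hs ht hst
    intro i
    have h1 : ⟪a i, s • y + t • y'⟫ = s * ⟪a i, y⟫ + t * ⟪a i, y'⟫ := by
      rw [inner_add_right, real_inner_smul_right, real_inner_smul_right]
    rw [h1]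
    calc s * ⟪a i, y⟫ + t * ⟪a i, y'⟫ ≤ s * b i + t * b i := by
          refine add_le_add ?_ ?_
          · exact mul_le_mul_of_nonneg_left (hy i) hs
          · exact mul_le_mul_of_nonneg_left (hy' i) ht
      _ = b i := by rw [← add_mul, hst, one_mul]
  obtain ⟨y, hyP, hymin'⟩ :=
    exists_norm_eq_iInf_of_complete_convex hne hPclosed.isComplete hPconvex x
  have hymin : ∀ w ∈ P, ‖x - y‖ ≤ ‖x - w‖ := by
    intro w hw
    rw [hymin']
    exact ciInf_le ⟨0, Set.forall_mem_range.2 fun _ => norm_nonneg _⟩ (⟨w, hw⟩ : P)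
  by_cases hd0 : x - y = 0
  · refine ⟨y, hyP, ?_⟩
    rw [hd0, norm_zero]
    exact mul_nonneg hH0 (Finset.sum_nonneg fun i _ => le_max_right _ _)
  set d := x - y with hdd
  set A : Finset (Fin k) := Finset.univ.filter (fun i => ⟪a i, y⟫ = b i) with hA
  set a' : Fin k → E := fun i => if i ∈ A then a i else 0 with ha'
  -- d belongs to the cone generated by the active constraint vectors
  have hdcone : d ∈ coneGen a' := by
    by_contra hdc
    obtain ⟨z, hz1, hz2⟩ := coneGen_separation a' hdc
    have hzA : ∀ i ∈ A, ⟪a i, z⟫ ≤ 0 := by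
      intro i hi
      have := hz1 i
      simp only [ha', if_pos hi] at this
      exact this
    have hz0 : z ≠ 0 := by
      intro h
      rw [h, inner_zero_right] at hz2
      exact lt_irrefl _ hz2
    have hnz : (0:ℝ) < ‖z‖^2 := pow_pos (norm_pos_iff.2 hz0) 2
    set tstar : ℝ := ⟪d, z⟫ / ‖z‖^2 with htstar
    have htstar0 : 0 < tstar := div_pos hz2 hnz
    set s : Fin k → ℝ := fun i =>
      if h : 0 < ⟪a i, z⟫ ∧ i ∉ A then (b i - ⟪a i, y⟫) / ⟪a i, z⟫ else 1 with hs
    have hspos : ∀ i, 0 < s i := by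
      intro i
      by_cases h : 0 < ⟪a i, z⟫ ∧ i ∉ A
      · simp only [hs, dif_pos h]
        refine div_pos ?_ h.1
        have hlt : ⟪a i, y⟫ ≠ b i := by
          intro hh
          exact h.2 (by simp [hA, hh])
        have := hyP i
        cases lt_or_eq_of_le this with
        | inl hlt2 => linarith
        | inr heq => exact absurd heq hlt
      · simp only [hs, dif_neg h]; exact one_pos
    obtain ⟨t, ht0, htle, hts⟩ := exists_pos_min s hspos tstar htstar0
    have hyP' : y + t • z ∈ P := by
      intro i
      have hinner : ⟪a i, y + t • z⟫ = ⟪a i, y⟫ + t * ⟪a i, z⟫ := by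
        rw [inner_add_right, real_inner_smul_right]
      rw [hinner]
      by_cases hpos : 0 < ⟪a i, z⟫
      · by_cases hiA : i ∈ A
        · exact absurd hpos (not_lt.2 (hzA i hiA))
        · have hsi := hts i
          simp only [hs] at hsi
          rw [dif_pos ⟨hpos, hiA⟩] at hsi
          have := (le_div_iff₀ hpos).1 hsi
          linarith
      · have : t * ⟪a i, z⟫ ≤ 0 :=
          mul_nonpos_of_nonneg_of_nonpos (le_of_lt ht0) (not_lt.1 hpos)
        linarith [hyP i]
    have hlt : ‖x - (y + t • z)‖^2 < ‖d‖^2 := by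
      have hexp : x - (y + t • z) = d - t • z := by rw [hdd]; abel
      rw [hexp]
      have : ‖d - t • z‖^2 = ‖d‖^2 - 2 * (t * ⟪d, z⟫) + t^2 * ‖z‖^2 := by
        rw [norm_sub_sq_real, real_inner_smul_right, norm_smul]
        simp [mul_pow]
      rw [this]
      have h1 : t * ‖z‖^2 ≤ ⟪d, z⟫ := by
        have := (le_div_iff₀ hnz).1 htle
        linarith
      have h2 : t^2 * ‖z‖^2 ≤ t * ⟪d, z⟫ := by
        have := mul_le_mul_of_nonneg_left h1 (le_of_lt ht0)
        calc t^2 * ‖z‖^2 = t * (t * ‖z‖^2) := by ring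
          _ ≤ t * ⟪d, z⟫ := this
      have h3 : 0 < t * ⟪d, z⟫ := mul_pos ht0 hz2
      linarith
    have hge : ‖d‖ ≤ ‖x - (y + t • z)‖ := hymin _ hyP'
    have : ‖d‖^2 ≤ ‖x - (y + t • z)‖^2 := by
      exact pow_le_pow_left₀ (norm_nonneg _) hge 2
    linarith
  -- extract a representation supported on a linearly independent active subfamily
  obtain ⟨lam, hlam0, hlamrep⟩ := hdcone
  have hlamA : ∀ i, i ∉ A → lam i • a' i = 0 := fun i hi => by
    rw [ha']; simp [hi]
  obtain ⟨μ, J, hμ0, hμJ, hJlam, hJli', hμsum⟩ :=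
    carath_cone_aux (Fintype.card (Fin k)) a'
      (fun i => if i ∈ A then lam i else 0)
      (fun i => by by_cases h : i ∈ A <;> simp [h, hlam0 i])
      (Finset.card_le_univ _)
  have hJA : ∀ i ∈ J, i ∈ A := by
    intro i hi
    have := hJlam i hi
    by_contra h
    simp [h] at this
  have hJli : LinearIndependent ℝ (fun i : ↥J => a ↑i) := by
    have : (fun i : ↥J => a' ↑i) = (fun i : ↥J => a ↑i) := by
      funext i
      rw [ha']
      simp [hJA i i.2]
    rwa [this] at hJli'
  -- d = ∑ μ i • a i with μ supported on J ⊆ A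
  have hrepd : d = ∑ i, μ i • a i := by
    have h1 : ∑ i, (if i ∈ A then lam i else 0) • a' i = ∑ i, lam i • a' i := by
      refine Finset.sum_congr rfl fun i _ => ?_
      by_cases h : i ∈ A
      · simp [h]
      · simp [h, hlamA i h]
    have h2 : ∑ i, lam i • a' i = d := hlamrep.symm
    have h3 : ∑ i, μ i • a' i = ∑ i, μ i • a i := by
      refine Finset.sum_congr rfl fun i _ => ?_
      by_cases h : μ i = 0
      · simp [h]
      · simp only [ha', if_pos (hJA i (hμJ i h))]
    rw [← h3, hμsum, h1, h2]
  -- bound the coefficients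
  have hrestr : ∑ j : ↥J, μ ↑j • a ↑j = d := by
    rw [hrepd, ← Finset.sum_subset (Finset.subset_univ J)
      (fun i _ hi => by rw [of_not_not (fun h => hi (hμJ i h)), zero_smul]),
      ← Finset.sum_attach J (fun i => μ i • a i), ← Finset.univ_eq_attach]
  have hμbound : ∀ i, μ i ≤ C J * ‖d‖ := by
    intro i
    by_cases h : i ∈ J
    · have := hC J hJli (fun j : ↥J => μ ↑j) ⟨i, h⟩
      rw [hrestr] at this
      exact le_trans (le_abs_self _) this
    · have : μ i = 0 := of_not_not (fun hh => h (hμJ i hh))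
      rw [this]
      exact mul_nonneg (hC0 J) (norm_nonneg _)
  -- final computation
  set res : Fin k → ℝ := fun i => max (⟪a i, x⟫ - b i) 0 with hres
  have hres0 : ∀ i, 0 ≤ res i := fun i => le_max_right _ _
  have hterm : ∀ i, μ i * ⟪a i, d⟫ ≤ (C J * ‖d‖) * res i := by
    intro i
    by_cases h : μ i = 0
    · rw [h, zero_mul]
      exact mul_nonneg (mul_nonneg (hC0 J) (norm_nonneg _)) (hres0 i)
    · have hiA : i ∈ A := hJA i (hμJ i h)
      have hby : ⟪a i, y⟫ = b i := by
        have := hiA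
        rw [hA] at this
        simpa using this
      have hinnerd : ⟪a i, d⟫ = ⟪a i, x⟫ - b i := by
        rw [hdd, inner_sub_right, hby]
      have h1 : ⟪a i, d⟫ ≤ res i := by
        rw [hinnerd, hres]
        exact le_max_left _ _
      have h2 : μ i * ⟪a i, d⟫ ≤ μ i * res i :=
        mul_le_mul_of_nonneg_left h1 (hμ0 i)
      have h3 : μ i * res i ≤ (C J * ‖d‖) * res i :=
        mul_le_mul_of_nonneg_right (hμbound i) (hres0 i)
      linarith
  have hdsq : ‖d‖^2 = ∑ i, μ i * ⟪a i, d⟫ := by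
    rw [← real_inner_self_eq_norm_sq]
    nth_rewrite 1 [hrepd]
    rw [sum_inner]
    exact Finset.sum_congr rfl fun i _ => real_inner_smul_left _ _ _
  have hkey : ‖d‖^2 ≤ (C J * ‖d‖) * ∑ i, res i := by
    rw [hdsq, Finset.mul_sum]
    exact Finset.sum_le_sum fun i _ => hterm i
  have hdpos : 0 < ‖d‖ := norm_pos_iff.2 hd0
  refine ⟨y, hyP, ?_⟩
  rw [← hdd]
  have : ‖d‖ * ‖d‖ ≤ (C J * ∑ i, res i) * ‖d‖ := by
    calc ‖d‖ * ‖d‖ = ‖d‖^2 := by ring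
      _ ≤ (C J * ‖d‖) * ∑ i, res i := hkey
      _ = (C J * ∑ i, res i) * ‖d‖ := by ring
  have h4 : ‖d‖ ≤ C J * ∑ i, res i := le_of_mul_le_mul_right (by linarith) hdpos
  calc ‖d‖ ≤ C J * ∑ i, res i := h4
    _ ≤ H * ∑ i, res i := by
        exact mul_le_mul_of_nonneg_right (hCle J)
          (Finset.sum_nonneg fun i _ => hres0 i)

end HoffmanCore


section TangentHelpers

lemma tangent_seg {E : Type*} [AddCommGroup E] [Module ℝ E] {k : ℕ}
    (f : Fin k → E →ₗ[ℝ] ℝ) (c : Fin k → ℝ) {g : E} (hg : ∀ i, f i g ≤ c i)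
    {d : E} {t₀ : ℝ} (ht₀ : 0 < t₀) (hmem : ∀ i, f i (g + t₀ • d) ≤ c i)
    {t : ℝ} (ht : 0 < t) (htle : t ≤ t₀) : ∀ i, f i (g + t • d) ≤ c i := by
  intro i
  have h0 := hmem i
  rw [map_add, _root_.map_smul, smul_eq_mul] at h0 ⊢
  rcases le_or_gt (f i d) 0 with h | h
  · have : t * f i d ≤ 0 := mul_nonpos_of_nonneg_of_nonpos (le_of_lt ht) h
    linarith [hg i]
  · have : t * f i d ≤ t₀ * f i d := mul_le_mul_of_nonneg_right htle (le_of_lt h)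
    linarith

lemma tangent_char {E : Type*} [AddCommGroup E] [Module ℝ E] {k : ℕ}
    (f : Fin k → E →ₗ[ℝ] ℝ) (c : Fin k → ℝ) {g : E} (hg : ∀ i, f i g ≤ c i) :
    polyTangentCone {x | ∀ i, f i x ≤ c i} g = {d | ∀ i, f i g = c i → f i d ≤ 0} := by
  ext d
  constructor
  · rintro ⟨t, ht, hmem⟩ i hi
    have := hmem i
    rw [map_add, _root_.map_smul, smul_eq_mul, hi] at this
    nlinarith
  · intro hd
    classical
    set s : Fin k → ℝ := fun i =>
      if h : 0 < f i d ∧ f i g ≠ c i then (c i - f i g) / (f i d) else 1 with hs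
    have hspos : ∀ i, 0 < s i := by
      intro i
      by_cases h : 0 < f i d ∧ f i g ≠ c i
      · simp only [hs, dif_pos h]
        exact div_pos (by rcases lt_or_eq_of_le (hg i) with h2 | h2; · linarith
                          · exact absurd h2 h.2) h.1
      · simp only [hs, dif_neg h]; exact one_pos
    obtain ⟨t, ht0, -, hts⟩ := exists_pos_min s hspos 1 one_pos
    refine ⟨t, ht0, fun i => ?_⟩
    rw [map_add, _root_.map_smul, smul_eq_mul]
    rcases le_or_gt (f i d) 0 with h | h
    · have : t * f i d ≤ 0 := mul_nonpos_of_nonneg_of_nonpos (le_of_lt ht0) h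
      linarith [hg i]
    · have hne : f i g ≠ c i := by
        intro hh
        linarith [hd i hh]
      have hsi := hts i
      simp only [hs] at hsi
      rw [dif_pos ⟨h, hne⟩] at hsi
      have := (le_div_iff₀ h).1 hsi
      linarith

lemma linfun_bound {n : ℕ} (φ : (Fin n → ℝ) →ₗ[ℝ] ℝ) :
    ∃ B : ℝ, 0 ≤ B ∧ ∀ x, |φ x| ≤ B * ‖x‖ := by
  refine ⟨∑ i, |φ (Pi.single i 1)|, Finset.sum_nonneg fun i _ => abs_nonneg _, fun x => ?_⟩
  have hx : x = ∑ i, (x i) • (Pi.single i 1 : Fin n → ℝ) := by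
    ext j; simp [Pi.single_apply]
  calc |φ x| = |∑ i, (x i) * φ (Pi.single i 1)| := by
        nth_rewrite 1 [hx]
        rw [map_sum]
        congr 1
        exact Finset.sum_congr rfl fun i _ => by rw [_root_.map_smul, smul_eq_mul]
    _ ≤ ∑ i, |(x i) * φ (Pi.single i 1)| := Finset.abs_sum_le_sum_abs _ _
    _ = ∑ i, |x i| * |φ (Pi.single i 1)| := by
        exact Finset.sum_congr rfl fun i _ => abs_mul _ _
    _ ≤ ∑ i, ‖x‖ * |φ (Pi.single i 1)| := by
        refine Finset.sum_le_sum fun i _ => ?_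
        exact mul_le_mul_of_nonneg_right (by simpa using norm_le_pi_norm x i) (abs_nonneg _)
    _ = (∑ i, |φ (Pi.single i 1)|) * ‖x‖ := by
        rw [Finset.sum_mul]
        exact Finset.sum_congr rfl fun i _ => mul_comm _ _

lemma sup_le_eucl {n : ℕ} (x : EuclideanSpace ℝ (Fin n)) :
    ‖(fun j => x j : Fin n → ℝ)‖ ≤ ‖x‖ := by
  rw [pi_norm_le_iff_of_nonneg (norm_nonneg x)]
  intro j
  rw [EuclideanSpace.norm_eq]
  rw [Real.norm_eq_abs, ← Real.sqrt_sq_eq_abs]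
  apply Real.sqrt_le_sqrt
  have : |x j| ^ 2 ≤ ∑ i, ‖x i‖ ^ 2 := by
    have := Finset.single_le_sum (f := fun i => ‖x i‖ ^ 2)
      (fun i _ => by positivity) (Finset.mem_univ j)
    simpa [Real.norm_eq_abs] using this
  simpa [sq_abs] using this

end TangentHelpers

end
open scoped RealInnerProductSpace in
/-- For every tangent cone `T ∈ 𝒯(Φ)`, `H(Φ_T) ≤ H(Φ)`. -/
theorem stmt2 {p q : ℕ} (νp : (Fin p → ℝ) → ℝ) (νq : (Fin q → ℝ) → ℝ)
    (hνp : IsNorm νp) (hνq : IsNorm νq)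
    (Φ : (Fin p → ℝ) → Set (Fin q → ℝ)) (hΦ : IsPolyhedralMapping Φ) :
    ∀ T ∈ tangentCones Φ,
      hoffmanConst νp νq (mapOfGraph T) ≤ hoffmanConst νp νq Φ := by
  classical
  obtain ⟨k, f, c, hG⟩ := hΦ
  intro T hT
  obtain ⟨ubar, vbar, hvbar, hTdef⟩ := hT
  have hmemG : ∀ x : (Fin p → ℝ) × (Fin q → ℝ), x ∈ graphOf Φ ↔ ∀ i, f i x ≤ c i := by
    intro x
    rw [show (graphOf Φ) = {x | ∀ i, f i x ≤ c i} from hG]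
    rfl
  have hgG : ∀ i, f i (ubar, vbar) ≤ c i := (hmemG (ubar, vbar)).1 hvbar
  have hTchar : T = {d | ∀ i, f i (ubar, vbar) = c i → f i d ≤ 0} := by
    rw [hTdef, hG]
    exact tangent_char f c hgG
  have hTmem : ∀ d, d ∈ T ↔ ∃ t : ℝ, 0 < t ∧ (ubar, vbar) + t • d ∈ graphOf Φ := by
    intro d
    rw [hTdef]
    rfl
  have hTclosed : IsClosed T := by
    rw [hTchar]
    have hrw : {d : (Fin p → ℝ) × (Fin q → ℝ) | ∀ i, f i (ubar, vbar) = c i → f i d ≤ 0}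
        = ⋂ i, {d | f i (ubar, vbar) = c i → f i d ≤ 0} := by
      ext d; simp
    rw [hrw]
    refine isClosed_iInter fun i => ?_
    by_cases h : f i (ubar, vbar) = c i
    · have : {d : (Fin p → ℝ) × (Fin q → ℝ) | f i (ubar, vbar) = c i → f i d ≤ 0}
          = {d | f i d ≤ 0} := by ext d; simp [h]
      rw [this]
      exact isClosed_le (f i).continuous_of_finiteDimensional continuous_const
    · have : {d : (Fin p → ℝ) × (Fin q → ℝ) | f i (ubar, vbar) = c i → f i d ≤ 0}
          = Set.univ := by ext d; simp [h]
      rw [this]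
      exact isClosed_univ
  have hGclosed : IsClosed (graphOf Φ) := by
    rw [hG]
    have hrw : {x : (Fin p → ℝ) × (Fin q → ℝ) | ∀ i, f i x ≤ c i}
        = ⋂ i, {x | f i x ≤ c i} := by ext x; simp
    rw [hrw]
    exact isClosed_iInter fun i =>
      isClosed_le (f i).continuous_of_finiteDimensional continuous_const
  have hadd : ∀ (i : Fin k) (u : Fin p → ℝ) (w : Fin q → ℝ),
      f i (u, w) = f i (u, 0) + f i (0, w) := by
    intro i u w
    rw [← map_add]
    congr 1
    rw [Prod.mk_add_mk, add_zero, zero_add]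
  -- membership characterization of Φ u
  have hQmem : ∀ (u : Fin p → ℝ) (v' : Fin q → ℝ),
      v' ∈ Φ u ↔ ∀ i, f i ((0 : Fin p → ℝ), v') ≤ c i - f i (u, 0) := by
    intro u v'
    rw [show (v' ∈ Φ u) ↔ ((u, v') ∈ graphOf Φ) from Iff.rfl, hmemG]
    refine forall_congr' fun i => ?_
    rw [hadd i u v']
    constructor <;> intro h <;> linarith
  have hinvmem : ∀ (u' : Fin p → ℝ) (v : Fin q → ℝ), u' ∈ invOf Φ v ↔ v ∈ Φ u' := by
    intro u' v
    rfl
  have hinvclosed : ∀ v : Fin q → ℝ, IsClosed (invOf Φ v) := by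
    intro v
    have : invOf Φ v = (fun u' => (u', v)) ⁻¹' graphOf Φ := rfl
    rw [this]
    exact hGclosed.preimage (continuous_id.prodMk continuous_const)
  -- the ratio sets
  set R : Set ℝ := {r | ∃ u v, u ∈ domOf Φ ∧ v ∈ imOf Φ ∧ v ∉ Φ u ∧
    r = distWith νq v (Φ u) / distWith νp u (invOf Φ v)} with hR
  set L : Set ℝ := {r | ∃ u v, u ∈ domOf (mapOfGraph T) ∧ v ∈ imOf (mapOfGraph T) ∧
    v ∉ mapOfGraph T u ∧
    r = distWith νq v (mapOfGraph T u) / distWith νp u (invOf (mapOfGraph T) v)} with hL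
  have hRconst : hoffmanConst νp νq Φ = sSup R := rfl
  have hLconst : hoffmanConst νp νq (mapOfGraph T) = sSup L := rfl
  ------------------------------------------------------------------
  -- Part B : R is bounded above (Hoffman's lemma)
  ------------------------------------------------------------------
  have hBs : ∀ i : Fin k, ∃ B, 0 ≤ B ∧ ∀ w : Fin p → ℝ, |f i (w, 0)| ≤ B * ‖w‖ := by
    intro i
    obtain ⟨B, hB0, hB⟩ := linfun_bound ((f i).comp (LinearMap.inl ℝ (Fin p → ℝ) (Fin q → ℝ)))
    exact ⟨B, hB0, fun w => by simpa using hB w⟩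
  choose B hB0 hBb using hBs
  obtain ⟨cp, hcp, hcpge⟩ := hνp.const_le
  obtain ⟨Cq, hCq0, hCqle⟩ := hνq.le_const
  set a : Fin k → EuclideanSpace ℝ (Fin q) :=
    fun i => (WithLp.equiv 2 (Fin q → ℝ)).symm
      (fun j => f i ((0 : Fin p → ℝ), Pi.single j 1)) with ha
  have hsplit : ∀ (i : Fin k) (w : Fin q → ℝ),
      f i ((0 : Fin p → ℝ), w) = ∑ j, w j * f i ((0 : Fin p → ℝ), Pi.single j 1) := by
    intro i w
    have h0 := LinearMap.pi_apply_eq_sum_univ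
      ((f i).comp (LinearMap.inr ℝ (Fin p → ℝ) (Fin q → ℝ))) w
    simp only [LinearMap.comp_apply, LinearMap.inr_apply, smul_eq_mul] at h0
    rw [h0]
    refine Finset.sum_congr rfl fun j _ => ?_
    have hbase : (fun j' => if j = j' then (1:ℝ) else 0) = Pi.single j 1 := by
      funext j'
      simp [Pi.single_apply, eq_comm]
    rw [hbase]
  have hinner : ∀ (i : Fin k) (y : EuclideanSpace ℝ (Fin q)),
      (inner ℝ (a i) y : ℝ) = f i ((0 : Fin p → ℝ), fun j => y j) := by
    intro i y
    rw [hsplit]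
    rw [PiLp.inner_apply]
    refine Finset.sum_congr rfl fun j _ => ?_
    simp only [RCLike.inner_apply, conj_trivial]
    rfl
  obtain ⟨H, hH0, hHp⟩ := hoffman_core (E := EuclideanSpace ℝ (Fin q)) a
  set K : ℝ := (∑ i, B i / cp) + 1 with hK
  have hKpos : 0 < K := by
    have : 0 ≤ ∑ i, B i / cp :=
      Finset.sum_nonneg fun i _ => div_nonneg (hB0 i) (le_of_lt hcp)
    rw [hK]; linarith
  set M : ℝ := Cq * H * K with hM
  have hM0 : 0 ≤ M := by
    rw [hM]
    exact mul_nonneg (mul_nonneg hCq0 hH0) (le_of_lt hKpos)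
  have key : ∀ u v, u ∈ domOf Φ → v ∈ imOf Φ →
      distWith νq v (Φ u) ≤ M * distWith νp u (invOf Φ v) := by
    intro u v hu hv
    set b : Fin k → ℝ := fun i => c i - f i (u, 0) with hb
    obtain ⟨v₀, hv₀⟩ := hu
    have hQne : {y : EuclideanSpace ℝ (Fin q) | ∀ i, (inner ℝ (a i) y : ℝ) ≤ b i}.Nonempty := by
      refine ⟨(WithLp.equiv 2 (Fin q → ℝ)).symm v₀, fun i => ?_⟩
      rw [hinner]
      exact (hQmem u v₀).1 hv₀ i
    obtain ⟨y, hy, hybound⟩ := hHp b ((WithLp.equiv 2 (Fin q → ℝ)).symm v) hQne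
    set ypi : Fin q → ℝ := fun j => y j with hypi
    have hyΦ : ypi ∈ Φ u := (hQmem u ypi).2 (fun i => by
      have := hy i
      rwa [hinner i y] at this)
    have hres : ∀ i, (inner ℝ (a i) ((WithLp.equiv 2 (Fin q → ℝ)).symm v) : ℝ) - b i
        = f i (u, v) - c i := by
      intro i
      have hco : (fun j => ((WithLp.equiv 2 (Fin q → ℝ)).symm v) j) = v := rfl
      rw [hinner, hco, hb, hadd i u v]
      ring
    have hressum : (∑ i, max ((inner ℝ (a i) ((WithLp.equiv 2 (Fin q → ℝ)).symm v) : ℝ) - b i) 0)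
        = ∑ i, max (f i (u, v) - c i) 0 :=
      Finset.sum_congr rfl fun i _ => by rw [hres i]
    have hinvne : (invOf Φ v).Nonempty := by
      obtain ⟨u₀, hu₀⟩ := Set.mem_iUnion.1 hv
      exact ⟨u₀, hu₀⟩
    -- numerator bound
    have h1 : distWith νq v (Φ u) ≤ νq (v - ypi) := distWith_le hνq v hyΦ
    have h2 : νq (v - ypi) ≤ Cq * ‖v - ypi‖ := hCqle _
    have h3 : ‖v - ypi‖ ≤ ‖(WithLp.equiv 2 (Fin q → ℝ)).symm v - y‖ := by
      have hco : (fun j => ((WithLp.equiv 2 (Fin q → ℝ)).symm v - y) j) = v - ypi := rfl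
      rw [← hco]
      exact sup_le_eucl _
    have h4 : ‖(WithLp.equiv 2 (Fin q → ℝ)).symm v - y‖
        ≤ H * ∑ i, max (f i (u, v) - c i) 0 := by
      rw [← hressum]
      exact hybound
    -- residual vs denominator
    have h5 : ∀ u' ∈ invOf Φ v,
        (∑ i, max (f i (u, v) - c i) 0) ≤ K * νp (u - u') := by
      intro u' hu'
      have hu'Φ : v ∈ Φ u' := hu'
      have hstep : ∀ i, max (f i (u, v) - c i) 0 ≤ (B i / cp) * νp (u - u') := by
        intro i
        have hf' : f i (u', v) ≤ c i := (hmemG (u', v)).1 hu'Φ i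
        have hdiff : f i (u, v) - f i (u', v) = f i (u - u', 0) := by
          rw [← map_sub]
          congr 1
          rw [Prod.mk_sub_mk, sub_self]
        have habs : |f i (u - u', 0)| ≤ B i * ‖u - u'‖ := hBb i _
        have hnp : B i * ‖u - u'‖ ≤ (B i / cp) * νp (u - u') := by
          have hge := hcpge (u - u')
          rw [div_mul_eq_mul_div, le_div_iff₀ hcp]
          calc B i * ‖u - u'‖ * cp = B i * (cp * ‖u - u'‖) := by ring
            _ ≤ B i * νp (u - u') := mul_le_mul_of_nonneg_left hge (hB0 i)
            _ = B i * νp (u - u') := rfl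
        refine max_le ?_ ?_
        · calc f i (u, v) - c i ≤ f i (u, v) - f i (u', v) := by linarith
            _ = f i (u - u', 0) := hdiff
            _ ≤ |f i (u - u', 0)| := le_abs_self _
            _ ≤ B i * ‖u - u'‖ := habs
            _ ≤ (B i / cp) * νp (u - u') := hnp
        · exact mul_nonneg (div_nonneg (hB0 i) (le_of_lt hcp)) (hνp.nonneg _)
      calc (∑ i, max (f i (u, v) - c i) 0) ≤ ∑ i, (B i / cp) * νp (u - u') :=
            Finset.sum_le_sum fun i _ => hstep i
        _ = (∑ i, B i / cp) * νp (u - u') := by rw [Finset.sum_mul]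
        _ ≤ K * νp (u - u') := by
            refine mul_le_mul_of_nonneg_right ?_ (hνp.nonneg _)
            rw [hK]; linarith
    have h6 : (∑ i, max (f i (u, v) - c i) 0) / K ≤ distWith νp u (invOf Φ v) := by
      refine le_distWith u hinvne fun u' hu' => ?_
      rw [div_le_iff₀ hKpos]
      calc (∑ i, max (f i (u, v) - c i) 0) ≤ K * νp (u - u') := h5 u' hu'
        _ = νp (u - u') * K := mul_comm _ _
    have h7 : (∑ i, max (f i (u, v) - c i) 0) ≤ K * distWith νp u (invOf Φ v) := by
      rw [div_le_iff₀ hKpos] at h6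
      linarith
    have hsum0 : 0 ≤ ∑ i, max (f i (u, v) - c i) 0 :=
      Finset.sum_nonneg fun i _ => le_max_right _ _
    calc distWith νq v (Φ u) ≤ νq (v - ypi) := h1
      _ ≤ Cq * ‖v - ypi‖ := h2
      _ ≤ Cq * ‖(WithLp.equiv 2 (Fin q → ℝ)).symm v - y‖ :=
          mul_le_mul_of_nonneg_left h3 hCq0
      _ ≤ Cq * (H * ∑ i, max (f i (u, v) - c i) 0) :=
          mul_le_mul_of_nonneg_left h4 hCq0
      _ ≤ Cq * (H * (K * distWith νp u (invOf Φ v))) := by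
          refine mul_le_mul_of_nonneg_left (mul_le_mul_of_nonneg_left h7 hH0) hCq0
      _ = M * distWith νp u (invOf Φ v) := by rw [hM]; ring
  have hRbdd : BddAbove R := by
    refine ⟨M, ?_⟩
    rintro r ⟨u, v, hu, hv, hvn, rfl⟩
    have hinvne : (invOf Φ v).Nonempty := by
      obtain ⟨u₀, hu₀⟩ := Set.mem_iUnion.1 hv
      exact ⟨u₀, hu₀⟩
    have hden : 0 < distWith νp u (invOf Φ v) :=
      distWith_pos hνp u hinvne (hinvclosed v) (fun h => hvn h)
    rw [div_le_iff₀ hden]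
    exact key u v hu hv
  have hRnonneg : ∀ r ∈ R, 0 ≤ r := by
    rintro r ⟨u, v, hu, hv, hvn, rfl⟩
    exact div_nonneg (distWith_nonneg hνq v _) (distWith_nonneg hνp u _)
  ------------------------------------------------------------------
  -- Part A : L ⊆ R
  ------------------------------------------------------------------
  have hLR : L ⊆ R := by
    rintro r ⟨u, v, hu, hv, hvn, rfl⟩
    obtain ⟨z₀, hz₀⟩ := hu
    obtain ⟨w₀, hw₀⟩ := Set.mem_iUnion.1 hv
    have hST : mapOfGraph T u = {z | (u, z) ∈ T} := rfl
    have hSW : invOf (mapOfGraph T) v = {w | (w, v) ∈ T} := rfl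
    have hSTclosed : IsClosed (mapOfGraph T u) := by
      rw [hST]
      exact hTclosed.preimage (continuous_const.prodMk continuous_id)
    have hSWclosed : IsClosed (invOf (mapOfGraph T) v) := by
      rw [hSW]
      exact hTclosed.preimage (continuous_id.prodMk continuous_const)
    obtain ⟨zs, hzsT, hnum, hnmin⟩ :=
      distWith_attained hνq v ⟨z₀, hz₀⟩ hSTclosed
    obtain ⟨ws, hwsT, hden, hdmin⟩ :=
      distWith_attained hνp u ⟨w₀, hw₀⟩ hSWclosed
    have hnumpos : 0 < distWith νq v (mapOfGraph T u) :=
      distWith_pos hνq v ⟨z₀, hz₀⟩ hSTclosed hvn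
    have hdenpos : 0 < distWith νp u (invOf (mapOfGraph T) v) :=
      distWith_pos hνp u ⟨w₀, hw₀⟩ hSWclosed (fun h => hvn h)
    obtain ⟨t₁, ht₁, hmem₁⟩ := (hTmem (u, zs)).1 hzsT
    obtain ⟨t₂, ht₂, hmem₂⟩ := (hTmem (ws, v)).1 hwsT
    set t := min t₁ t₂ with htdef
    have ht : 0 < t := lt_min ht₁ ht₂
    have htne : t ≠ 0 := ne_of_gt ht
    set U : Fin p → ℝ := ubar + t • u with hU
    set V : Fin q → ℝ := vbar + t • v with hV
    have hprodeq : ∀ (x : Fin p → ℝ) (z : Fin q → ℝ) (s : ℝ),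
        (ubar, vbar) + s • (x, z) = (ubar + s • x, vbar + s • z) := by
      intro x z s
      rw [Prod.smul_mk, Prod.mk_add_mk]
    have hseg : ∀ (d : (Fin p → ℝ) × (Fin q → ℝ)) (t₀ : ℝ), 0 < t₀ →
        (ubar, vbar) + t₀ • d ∈ graphOf Φ → 0 < t → t ≤ t₀ →
        (ubar, vbar) + t • d ∈ graphOf Φ := by
      intro d t₀ ht₀ hmem htpos htle
      rw [hmemG]
      exact tangent_seg f c hgG ht₀ ((hmemG _).1 hmem) htpos htle
    have hUmem : vbar + t • zs ∈ Φ U := by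
      have := hseg (u, zs) t₁ ht₁ hmem₁ ht (min_le_left _ _)
      rw [hprodeq] at this
      exact this
    have hVmem : V ∈ Φ (ubar + t • ws) := by
      have := hseg (ws, v) t₂ ht₂ hmem₂ ht (min_le_right _ _)
      rw [hprodeq] at this
      exact this
    have hVnot : V ∉ Φ U := by
      intro hmem
      apply hvn
      refine (hTmem (u, v)).2 ⟨t, ht, ?_⟩
      rw [hprodeq]
      exact hmem
    -- numerator equality
    have hnumEq : distWith νq V (Φ U) = t * distWith νq v (mapOfGraph T u) := by
      refine le_antisymm ?_ ?_
      · have hle := distWith_le hνq V hUmem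
        have : V - (vbar + t • zs) = t • (v - zs) := by
          rw [hV, smul_sub]; abel
        rw [this, hνq.smul, abs_of_pos ht, ← hnum] at hle
        exact hle
      · refine le_distWith V ⟨vbar + t • zs, hUmem⟩ fun y hy => ?_
        have hzT : t⁻¹ • (y - vbar) ∈ mapOfGraph T u := by
          rw [hST]
          refine (hTmem (u, t⁻¹ • (y - vbar))).2 ⟨t, ht, ?_⟩
          rw [hprodeq, smul_smul, mul_inv_cancel₀ htne, one_smul, add_sub_cancel]
          exact hy
        have hVy : V - y = t • (v - t⁻¹ • (y - vbar)) := by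
          rw [smul_sub, smul_smul, mul_inv_cancel₀ htne, one_smul, hV]
          abel
        rw [hVy, hνq.smul, abs_of_pos ht]
        have := hnmin _ hzT
        rw [← hnum] at this
        exact mul_le_mul_of_nonneg_left this (le_of_lt ht)
    -- denominator equality
    have hdenEq : distWith νp U (invOf Φ V) = t * distWith νp u (invOf (mapOfGraph T) v) := by
      refine le_antisymm ?_ ?_
      · have hmemi : ubar + t • ws ∈ invOf Φ V := hVmem
        have hle := distWith_le hνp U hmemi
        have : U - (ubar + t • ws) = t • (u - ws) := by
          rw [hU, smul_sub]; abel
        rw [this, hνp.smul, abs_of_pos ht, ← hden] at hle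
        exact hle
      · refine le_distWith U ⟨ubar + t • ws, hVmem⟩ fun w hw => ?_
        have hwT : t⁻¹ • (w - ubar) ∈ invOf (mapOfGraph T) v := by
          rw [hSW]
          refine (hTmem (t⁻¹ • (w - ubar), v)).2 ⟨t, ht, ?_⟩
          rw [hprodeq, smul_smul, mul_inv_cancel₀ htne, one_smul, add_sub_cancel]
          exact hw
        have hUw : U - w = t • (u - t⁻¹ • (w - ubar)) := by
          rw [smul_sub, smul_smul, mul_inv_cancel₀ htne, one_smul, hU]
          abel
        rw [hUw, hνp.smul, abs_of_pos ht]
        have := hdmin _ hwT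
        rw [← hden] at this
        exact mul_le_mul_of_nonneg_left this (le_of_lt ht)
    refine ⟨U, V, ⟨vbar + t • zs, hUmem⟩, Set.mem_iUnion.2 ⟨ubar + t • ws, hVmem⟩, hVnot, ?_⟩
    rw [hnumEq, hdenEq, mul_div_mul_left _ _ htne]
  ------------------------------------------------------------------
  -- conclusion
  ------------------------------------------------------------------
  rw [hRconst, hLconst]
  rcases Set.eq_empty_or_nonempty L with hLe | hLne
  · rw [hLe, Real.sSup_empty]
    rcases Set.eq_empty_or_nonempty R with hRe | hRne
    · rw [hRe, Real.sSup_empty]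
    · obtain ⟨r, hr⟩ := hRne
      exact le_trans (hRnonneg r hr) (le_csSup hRbdd hr)
  · exact csSup_le_csSup hRbdd hLne hLR
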